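/- arXiv:1609.01999 — 2 statements merged into one kernel-verified Lean document; each statement's English description precedes it below -/
import Mathlib

section
/- Let A, B_1, ..., B_m be positive definite d×d matrices and p_1,...,p_m nonnegative weights summing to 1 with log λ(A) majorized by sum_l p_l log λ(B_l). Then for every continuous function f : (0,∞) → [0,∞) with x ↦ log f(e^x) convex on R, and every unitarily invariant norm ‖·‖, one has ‖f(A)‖ ≤ prod_{l=1}^m ‖f(B_l)‖^{p_l}. -/
open scoped BigOperators ComplexOrder

/-- The eigenvalues of a Hermitian matrix arranged in decreasing order
(counting multiplicities). -/
noncomputable def eigDesc {d : ℕ} {A : Matrix (Fin d) (Fin d) ℂ} (hA : A.IsHermitian) :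
    Fin d → ℝ :=
  fun i => (hA.eigenvalues ∘ Tuple.sort hA.eigenvalues) i.rev

/-- Functional calculus for a Hermitian matrix: apply `f` to the eigenvalues in the
spectral decomposition. -/
noncomputable def herFun {d : ℕ} {A : Matrix (Fin d) (Fin d) ℂ} (hA : A.IsHermitian)
    (f : ℝ → ℝ) : Matrix (Fin d) (Fin d) ℂ :=
  (hA.eigenvectorUnitary : Matrix (Fin d) (Fin d) ℂ) *
    Matrix.diagonal (fun i => (f (hA.eigenvalues i) : ℂ)) *
    star (hA.eigenvectorUnitary : Matrix (Fin d) (Fin d) ℂ)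

/-- A unitarily invariant norm on `d × d` complex matrices: a norm `N` with
`N (U X V) = N X` for all unitaries `U, V`. -/
structure UINorm (d : ℕ) where
  N : Matrix (Fin d) (Fin d) ℂ → ℝ
  add_le : ∀ X Y, N (X + Y) ≤ N X + N Y
  smul_eq : ∀ (c : ℂ) X, N (c • X) = ‖c‖ * N X
  pos_of_ne : ∀ X : Matrix (Fin d) (Fin d) ℂ, X ≠ 0 → (0:ℝ) < N X
  unitary_inv : ∀ U V X, U ∈ Matrix.unitaryGroup (Fin d) ℂ →
    V ∈ Matrix.unitaryGroup (Fin d) ℂ → N (U * X * V) = N X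


open Finset

namespace LogMajProof

variable {d : ℕ}

/-- Prefix sum of the first `k` coordinates. -/
def psum (v : Fin d → ℝ) (k : ℕ) : ℝ :=
  ∑ i ∈ Finset.univ.filter (fun i : Fin d => (i : ℕ) < k), v i


lemma exists_sort_perm (v : Fin d → ℝ) : ∃ π : Equiv.Perm (Fin d), Antitone (v ∘ π) := by
  refine ⟨Fin.revPerm.trans (Tuple.sort v), ?_⟩
  have h1 : Monotone (v ∘ ⇑(Tuple.sort v)) := Tuple.monotone_sort v
  have h2 : Antitone (fun i : Fin d => Fin.rev i) := fun i j h => Fin.rev_le_rev.mpr h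
  exact h1.comp_antitone h2

lemma strictMono_fin_nat_le {k : ℕ} {g : Fin k → ℕ} (hg : StrictMono g) (j : Fin k) :
    (j : ℕ) ≤ g j := by
  obtain ⟨n, hn⟩ := j
  induction n with
  | zero => simp
  | succ n ih =>
    have h1 : n < k := by omega
    have h2 := ih h1
    have h3 : g ⟨n, h1⟩ < g ⟨n + 1, hn⟩ := hg (by simp [Fin.lt_def])
    simpa using Nat.lt_of_le_of_lt h2 h3

lemma psum_eq_fin {v : Fin d → ℝ} {k : ℕ} (hk : k ≤ d) :
    psum v k = ∑ j : Fin k, v (Fin.castLE hk j) := by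
  unfold psum
  refine Finset.sum_bij' (fun a ha => (⟨(a : ℕ), (Finset.mem_filter.mp ha).2⟩ : Fin k))
    (fun b _ => Fin.castLE hk b) ?_ ?_ ?_ ?_ ?_ <;> intros <;>
    simp_all [Fin.castLE, Fin.ext_iff]

lemma sum_le_psum {u : Fin d → ℝ} (hu : Antitone u) (T : Finset (Fin d)) :
    ∑ i ∈ T, u i ≤ psum u T.card := by
  have hk : T.card ≤ d := by simpa using Finset.card_le_card (Finset.subset_univ T)
  rw [psum_eq_fin hk]
  set k := T.card with hkdef
  have hsum : ∑ i ∈ T, u i = ∑ j : Fin k, u (T.orderEmbOfFin rfl j) := by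
    rw [← Finset.sum_coe_sort T u,
      ← Equiv.sum_comp (T.orderIsoOfFin rfl).toEquiv (fun x : ↥T => u ↑x)]
    refine Finset.sum_congr rfl fun j _ => ?_
    simp [Finset.coe_orderIsoOfFin_apply]
  rw [hsum]
  refine Finset.sum_le_sum fun j _ => ?_
  refine hu ?_
  have hsm : StrictMono (fun i : Fin k => ((T.orderEmbOfFin rfl i : Fin d) : ℕ)) := by
    intro i1 i2 h
    exact Fin.lt_def.mp ((T.orderEmbOfFin rfl).strictMono h)
  have := strictMono_fin_nat_le hsm j
  exact Fin.le_def.mpr (by simpa using this)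

lemma psum_mono_k {v : Fin d → ℝ} (hv : ∀ i, 0 ≤ v i) {k1 k2 : ℕ} (h : k1 ≤ k2) :
    psum v k1 ≤ psum v k2 := by
  apply Finset.sum_le_sum_of_subset_of_nonneg
  · intro i hi
    simp only [Finset.mem_filter, Finset.mem_univ, true_and] at hi ⊢
    omega
  · intro i _ _
    exact hv i

lemma abel_nat (U X Y : ℕ → ℝ) (n : ℕ)
    (hU : ∀ i, i + 1 < n → U (i + 1) ≤ U i)
    (hle : ∀ k, k < n → ∑ i ∈ Finset.range (k + 1), X i ≤ ∑ i ∈ Finset.range (k + 1), Y i)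
    (hlast : 0 ≤ U (n - 1) ∨ ∑ i ∈ Finset.range n, X i = ∑ i ∈ Finset.range n, Y i) :
    ∑ i ∈ Finset.range n, U i * X i ≤ ∑ i ∈ Finset.range n, U i * Y i := by
  rcases Nat.eq_zero_or_pos n with rfl | hn
  · simp
  have eX := Finset.sum_range_by_parts U X n
  have eY := Finset.sum_range_by_parts U Y n
  simp only [smul_eq_mul] at eX eY
  rw [eX, eY]
  have h1 : U (n - 1) * ∑ i ∈ range n, X i ≤ U (n - 1) * ∑ i ∈ range n, Y i := by
    rcases hlast with h | h
    · refine mul_le_mul_of_nonneg_left ?_ h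
      have h2 := hle (n - 1) (by omega)
      rwa [Nat.sub_add_cancel hn] at h2
    · rw [h]
  have h2 : ∑ i ∈ range (n - 1), (U (i + 1) - U i) * ∑ j ∈ range (i + 1), Y j ≤
      ∑ i ∈ range (n - 1), (U (i + 1) - U i) * ∑ j ∈ range (i + 1), X j := by
    refine Finset.sum_le_sum fun i hi => ?_
    rw [Finset.mem_range] at hi
    have hUi : U (i + 1) - U i ≤ 0 := sub_nonpos.mpr (hU i (by omega))
    exact mul_le_mul_of_nonpos_left (hle i (by omega)) hUi
  linarith

/-- extension by zero to `ℕ` -/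
noncomputable def ext0 (v : Fin d → ℝ) : ℕ → ℝ := fun n => if h : n < d then v ⟨n, h⟩ else 0

lemma sum_univ_ext0 (v : Fin d → ℝ) : ∑ i, v i = ∑ n ∈ Finset.range d, ext0 v n := by
  rw [← Fin.sum_univ_eq_sum_range (ext0 v) d]
  exact Finset.sum_congr rfl fun i _ => by simp [ext0, i.2]

lemma psum_eq_range {v : Fin d → ℝ} {k : ℕ} (hk : k ≤ d) :
    psum v k = ∑ n ∈ Finset.range k, ext0 v n := by
  unfold psum
  refine Finset.sum_bij' (fun (a : Fin d) _ => (a : ℕ))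
    (fun n hn => (⟨n, by rw [Finset.mem_range] at hn; omega⟩ : Fin d)) ?_ ?_ ?_ ?_ ?_
  · intro a ha
    rw [Finset.mem_range]
    exact (Finset.mem_filter.mp ha).2
  · intro n hn
    rw [Finset.mem_range] at hn
    simp [hn]
  · intro a _; simp
  · intro n _; simp
  · intro a ha
    simp [ext0, a.2]

lemma abel_fin {u x y : Fin d → ℝ} (hu : Antitone u)
    (hle : ∀ k, k ≤ d → psum x k ≤ psum y k)
    (hlast : (∀ i, 0 ≤ u i) ∨ (∑ i, x i = ∑ i, y i)) :
    ∑ i, u i * x i ≤ ∑ i, u i * y i := by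
  have key : ∑ n ∈ Finset.range d, ext0 u n * ext0 x n ≤
      ∑ n ∈ Finset.range d, ext0 u n * ext0 y n := by
    refine abel_nat (ext0 u) (ext0 x) (ext0 y) d ?_ ?_ ?_
    · intro i hi
      have h1 : i < d := by omega
      simp only [ext0, dif_pos hi, dif_pos h1]
      exact hu (by simp [Fin.le_def])
    · intro k hk
      have h1 := hle (k + 1) (by omega)
      rwa [psum_eq_range (by omega), psum_eq_range (by omega)] at h1
    · rcases hlast with h | h
      · left
        unfold ext0
        split
        · exact h _
        · exact le_refl 0
      · right
        rw [← sum_univ_ext0, ← sum_univ_ext0]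
        exact h
  calc ∑ i, u i * x i = ∑ n ∈ Finset.range d, ext0 u n * ext0 x n := by
        rw [← Fin.sum_univ_eq_sum_range (fun n => ext0 u n * ext0 x n) d]
        exact Finset.sum_congr rfl fun i _ => by simp [ext0, i.2]
    _ ≤ ∑ n ∈ Finset.range d, ext0 u n * ext0 y n := key
    _ = ∑ i, u i * y i := by
        rw [← Fin.sum_univ_eq_sum_range (fun n => ext0 u n * ext0 y n) d]
        exact (Finset.sum_congr rfl fun i _ => by simp [ext0, i.2]).symm

lemma clm_apply_pi (φ : (Fin d → ℝ) →L[ℝ] ℝ) (z : Fin d → ℝ) :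
    φ z = ∑ i, z i * φ (Pi.single i 1) := by
  have hz : z = ∑ i, z i • (Pi.single i 1 : Fin d → ℝ) := by
    ext j
    rw [Finset.sum_apply]
    simp [Pi.single_apply]
  conv_lhs => rw [hz]
  rw [map_sum]
  simp [smul_eq_mul]

lemma mem_convexHull_perm {x y : Fin d → ℝ} (hx : Antitone x) (hy : Antitone y)
    (hle : ∀ k, k ≤ d → psum x k ≤ psum y k) (hsum : ∑ i, x i = ∑ i, y i) :
    x ∈ convexHull ℝ (Set.range (fun π : Equiv.Perm (Fin d) => y ∘ π)) := by
  by_contra hcon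
  obtain ⟨φ, u, hlt, hgt⟩ := geometric_hahn_banach_closed_point
    (convex_convexHull ℝ _) ((Set.finite_range _).isClosed_convexHull (𝕜 := ℝ)) hcon
  set w : Fin d → ℝ := fun i => φ (Pi.single i 1) with hw
  obtain ⟨σ, hσ⟩ := exists_sort_perm w
  have hmem : (y ∘ ⇑σ⁻¹) ∈ convexHull ℝ (Set.range fun π : Equiv.Perm (Fin d) => y ∘ π) :=
    subset_convexHull ℝ _ ⟨σ⁻¹, rfl⟩
  have h1 : φ (y ∘ ⇑σ⁻¹) = ∑ i, y i * w (σ i) := by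
    rw [clm_apply_pi, ← Equiv.sum_comp σ (fun i => (y ∘ ⇑σ⁻¹) i * w i)]
    exact Finset.sum_congr rfl fun k _ => by simp
  have h2 : φ x = ∑ i, x i * w i := clm_apply_pi φ x
  have h3 : ∑ i, x i * w i ≤ ∑ i, x i * w (σ i) := by
    have hmono : Monovary x (w ∘ σ) := hx.monovary hσ
    have h4 := hmono.sum_mul_comp_perm_le_sum_mul (σ := σ⁻¹)
    simpa using h4
  have h4 : ∑ i, x i * w (σ i) ≤ ∑ i, y i * w (σ i) := by
    have h5 := abel_fin (u := w ∘ σ) (x := x) (y := y) hσ hle (Or.inr hsum)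
    simpa [mul_comm] using h5
  have h5 := hlt _ hmem
  rw [h1] at h5
  rw [h2] at hgt
  linarith

lemma mem_convexHull_signperm {x y : Fin d → ℝ} (hx : Antitone x) (hy : Antitone y)
    (hx0 : ∀ i, 0 ≤ x i)
    (hle : ∀ k, k ≤ d → psum x k ≤ psum y k) :
    x ∈ convexHull ℝ (Set.range (fun q : (Fin d → Bool) × Equiv.Perm (Fin d) =>
      fun i => (if q.1 i then (1:ℝ) else -1) * y (q.2 i))) := by
  by_contra hcon
  obtain ⟨φ, u, hlt, hgt⟩ := geometric_hahn_banach_closed_point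
    (convex_convexHull ℝ _) ((Set.finite_range _).isClosed_convexHull (𝕜 := ℝ)) hcon
  set w : Fin d → ℝ := fun i => φ (Pi.single i 1) with hw
  set aw : Fin d → ℝ := fun i => |w i| with haw
  obtain ⟨σ, hσ⟩ := exists_sort_perm aw
  set q : (Fin d → Bool) × Equiv.Perm (Fin d) := (fun i => decide (0 ≤ w i), σ⁻¹) with hq
  set astar : Fin d → ℝ := fun i => (if q.1 i then (1:ℝ) else -1) * y (q.2 i) with hastar
  have hmem : astar ∈ convexHull ℝ (Set.range (fun q : (Fin d → Bool) × Equiv.Perm (Fin d) =>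
      fun i => (if q.1 i then (1:ℝ) else -1) * y (q.2 i))) :=
    subset_convexHull ℝ _ ⟨q, rfl⟩
  have hsign : ∀ i, (if q.1 i then (1:ℝ) else -1) * w i = aw i := by
    intro i
    simp only [hq, haw]
    by_cases h : 0 ≤ w i
    · simp [h, abs_of_nonneg h]
    · simp [h, abs_of_neg (lt_of_not_ge h)]
  have h1 : φ astar = ∑ i, y i * aw (σ i) := by
    rw [clm_apply_pi, ← Equiv.sum_comp σ (fun i => astar i * w i)]
    refine Finset.sum_congr rfl fun k _ => ?_
    simp only [hastar]
    rw [mul_comm ((if q.1 (σ k) then (1:ℝ) else -1)) (y (q.2 (σ k))), mul_assoc, hsign (σ k)]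
    simp [hq]
  have h2 : φ x = ∑ i, x i * w i := clm_apply_pi φ x
  have h3 : ∑ i, x i * w i ≤ ∑ i, x i * aw i := by
    refine Finset.sum_le_sum fun i _ => ?_
    exact mul_le_mul_of_nonneg_left (le_abs_self _) (hx0 i)
  have h4 : ∑ i, x i * aw i ≤ ∑ i, x i * aw (σ i) := by
    have hmono : Monovary x (aw ∘ σ) := hx.monovary hσ
    have h5 := hmono.sum_mul_comp_perm_le_sum_mul (σ := σ⁻¹)
    simpa using h5
  have h5 : ∑ i, x i * aw (σ i) ≤ ∑ i, y i * aw (σ i) := by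
    have h6 := abel_fin (u := aw ∘ σ) (x := x) (y := y) hσ hle
      (Or.inl fun i => abs_nonneg _)
    simpa [mul_comm] using h6
  have h6 := hlt _ hmem
  rw [h1] at h6
  rw [h2] at hgt
  linarith

lemma jensen_mult {ι : Type*} (g : ℝ → ℝ) (hg0 : ∀ t, 0 ≤ g t)
    (hgc : ∀ a b t : ℝ, 0 ≤ t → t ≤ 1 → g (t * a + (1 - t) * b) ≤ g a ^ t * g b ^ (1 - t))
    (s : Finset ι) (w tt : ι → ℝ) (hw : ∀ i ∈ s, 0 ≤ w i) (h1 : ∑ i ∈ s, w i = 1) :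
    g (∑ i ∈ s, w i * tt i) ≤ ∏ i ∈ s, g (tt i) ^ w i := by
  induction s using Finset.cons_induction generalizing w with
  | empty => simp at h1
  | cons a s ha ih =>
    rw [Finset.sum_cons] at h1 ⊢
    rw [Finset.prod_cons]
    have hwa : 0 ≤ w a := hw a (Finset.mem_cons_self a s)
    have hws : ∀ i ∈ s, 0 ≤ w i := fun i hi => hw i (Finset.mem_cons_of_mem hi)
    have hWnn : 0 ≤ ∑ i ∈ s, w i := Finset.sum_nonneg hws
    by_cases hW0 : ∑ i ∈ s, w i = 0
    · have hz : ∀ i ∈ s, w i = 0 := (Finset.sum_eq_zero_iff_of_nonneg hws).mp hW0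
      have hwa1 : w a = 1 := by rw [hW0] at h1; linarith
      have hsum0 : ∑ i ∈ s, w i * tt i = 0 :=
        Finset.sum_eq_zero fun i hi => by rw [hz i hi, zero_mul]
      have hprod1 : ∏ i ∈ s, g (tt i) ^ w i = 1 :=
        Finset.prod_eq_one fun i hi => by rw [hz i hi, Real.rpow_zero]
      rw [hsum0, hwa1, hprod1]
      simp [Real.rpow_one]
    · have hWpos : 0 < ∑ i ∈ s, w i := lt_of_le_of_ne hWnn (Ne.symm hW0)
      have hwa1 : w a ≤ 1 := by linarith
      have hIH := ih (fun i => w i / ∑ j ∈ s, w j)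
        (fun i hi => div_nonneg (hws i hi) hWnn)
        (by rw [← Finset.sum_div]; field_simp)
      have h1W : 1 - w a = ∑ i ∈ s, w i := by linarith
      have hc : (1 - w a) * ∑ i ∈ s, w i / (∑ j ∈ s, w j) * tt i = ∑ i ∈ s, w i * tt i := by
        rw [h1W, Finset.mul_sum]
        refine Finset.sum_congr rfl fun i _ => ?_
        field_simp
      have key := hgc (tt a) (∑ i ∈ s, w i / (∑ j ∈ s, w j) * tt i) (w a) hwa hwa1
      calc g (w a * tt a + ∑ i ∈ s, w i * tt i)
          = g (w a * tt a + (1 - w a) * ∑ i ∈ s, w i / (∑ j ∈ s, w j) * tt i) := by rw [hc]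
        _ ≤ g (tt a) ^ w a * g (∑ i ∈ s, w i / (∑ j ∈ s, w j) * tt i) ^ (1 - w a) := key
        _ ≤ g (tt a) ^ w a * (∏ i ∈ s, g (tt i) ^ (w i / (∑ j ∈ s, w j))) ^ (1 - w a) := by
            refine mul_le_mul_of_nonneg_left ?_ (Real.rpow_nonneg (hg0 _) _)
            exact Real.rpow_le_rpow (hg0 _) hIH (by linarith)
        _ = g (tt a) ^ w a * ∏ i ∈ s, g (tt i) ^ w i := by
            congr 1
            rw [← Real.finset_prod_rpow s _ (fun i _ => Real.rpow_nonneg (hg0 _) _) (1 - w a)]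
            refine Finset.prod_congr rfl fun i hi => ?_
            rw [← Real.rpow_mul (hg0 _), h1W, div_mul_cancel₀ _ hW0]

lemma sum_le_psum_sorted (v : Fin d → ℝ) {ρ : Equiv.Perm (Fin d)} (hρ : Antitone (v ∘ ρ))
    (T : Finset (Fin d)) : ∑ i ∈ T, v i ≤ psum (v ∘ ρ) T.card := by
  have h1 : ∑ i ∈ T.map ρ.symm.toEmbedding, (v ∘ ρ) i = ∑ i ∈ T, v i := by
    rw [Finset.sum_map]
    exact Finset.sum_congr rfl fun i _ => by simp
  have h2 := sum_le_psum hρ (T.map ρ.symm.toEmbedding)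
  rw [h1, Finset.card_map] at h2
  exact h2

lemma maj_gsum_le {x y : Fin d → ℝ} (hx : Antitone x) (hy : Antitone y)
    (hle : ∀ k, k ≤ d → psum x k ≤ psum y k) (hsum : ∑ i, x i = ∑ i, y i)
    (g : ℝ → ℝ) (hg0 : ∀ t, 0 ≤ g t)
    (hgc : ∀ a b t : ℝ, 0 ≤ t → t ≤ 1 → g (t * a + (1 - t) * b) ≤ g a ^ t * g b ^ (1 - t))
    {ρ : Equiv.Perm (Fin d)} (hρ : Antitone ((fun i => g (y i)) ∘ ρ)) (S : Finset (Fin d)) :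
    ∑ i ∈ S, g (x i) ≤ psum ((fun i => g (y i)) ∘ ρ) S.card := by
  classical
  have hmem := mem_convexHull_perm hx hy hle hsum
  rw [show (Set.range (fun π : Equiv.Perm (Fin d) => y ∘ π)) =
      ((Finset.univ.image (fun π : Equiv.Perm (Fin d) => y ∘ π) : Finset (Fin d → ℝ)) :
        Set (Fin d → ℝ)) by rw [Finset.coe_image, Finset.coe_univ, Set.image_univ]] at hmem
  rw [Finset.convexHull_eq] at hmem
  obtain ⟨wgt, hwgt0, hwgt1, hcm⟩ := hmem
  rw [Finset.centerMass_eq_of_sum_1 _ _ hwgt1] at hcm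
  set F : Finset (Fin d → ℝ) := Finset.univ.image (fun π : Equiv.Perm (Fin d) => y ∘ π) with hF
  -- pointwise bound : g (x i) ≤ ∑_{z ∈ F} wgt z * g (z i)
  have hpt : ∀ i, g (x i) ≤ ∑ z ∈ F, wgt z * g (z i) := by
    intro i
    have hxi : x i = ∑ z ∈ F, wgt z * z i := by
      have := congrFun hcm i
      rw [Finset.sum_apply] at this
      simp only [Pi.smul_apply, smul_eq_mul, id] at this
      exact this.symm
    calc g (x i) = g (∑ z ∈ F, wgt z * z i) := by rw [hxi]
      _ ≤ ∏ z ∈ F, g (z i) ^ wgt z := jensen_mult g hg0 hgc F wgt (fun z => z i) hwgt0 hwgt1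
      _ ≤ ∑ z ∈ F, wgt z * g (z i) :=
          Real.geom_mean_le_arith_mean_weighted F wgt (fun z => g (z i)) hwgt0 hwgt1
            (fun z _ => hg0 _)
  calc ∑ i ∈ S, g (x i) ≤ ∑ i ∈ S, ∑ z ∈ F, wgt z * g (z i) :=
        Finset.sum_le_sum fun i _ => hpt i
    _ = ∑ z ∈ F, wgt z * ∑ i ∈ S, g (z i) := by
        rw [Finset.sum_comm]
        exact Finset.sum_congr rfl fun z _ => by rw [Finset.mul_sum]
    _ ≤ ∑ z ∈ F, wgt z * psum ((fun i => g (y i)) ∘ ρ) S.card := by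
        refine Finset.sum_le_sum fun z hz => ?_
        refine mul_le_mul_of_nonneg_left ?_ (hwgt0 z hz)
        obtain ⟨π, _, rfl⟩ := Finset.mem_image.mp hz
        have h1 : ∑ i ∈ S, g ((y ∘ π) i) = ∑ i ∈ S.map π.toEmbedding, g (y i) := by
          rw [Finset.sum_map]
          exact Finset.sum_congr rfl fun i _ => rfl
        rw [h1]
        have h2 := sum_le_psum_sorted (fun i => g (y i)) hρ (S.map π.toEmbedding)
        rwa [Finset.card_map] at h2
    _ = psum ((fun i => g (y i)) ∘ ρ) S.card := by rw [← Finset.sum_mul, hwgt1, one_mul]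

variable (Φ : UINorm d)

/-- The symmetric gauge function associated to a unitarily invariant norm. -/
noncomputable def Nv (Φ : UINorm d) (v : Fin d → ℝ) : ℝ :=
  Φ.N (Matrix.diagonal (fun i => (v i : ℂ)))

lemma N_zero : Φ.N 0 = 0 := by
  have := Φ.smul_eq 0 0
  simpa using this

lemma N_nonneg (X : Matrix (Fin d) (Fin d) ℂ) : 0 ≤ Φ.N X := by
  have h1 : Φ.N (-X) = Φ.N X := by
    have := Φ.smul_eq (-1) X
    simpa using this
  have h2 := Φ.add_le X (-X)
  rw [add_neg_cancel, N_zero, h1] at h2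
  linarith

lemma Nv_zero : Nv Φ (0 : Fin d → ℝ) = 0 := by
  unfold Nv
  convert N_zero Φ using 2
  simp [Matrix.diagonal_zero]

lemma Nv_nonneg (v : Fin d → ℝ) : 0 ≤ Nv Φ v := N_nonneg Φ _

lemma Nv_pos {v : Fin d → ℝ} (hv : v ≠ 0) : 0 < Nv Φ v := by
  refine Φ.pos_of_ne _ ?_
  intro h
  apply hv
  ext i
  have := congrFun (congrFun h i) i
  simp only [Matrix.diagonal_apply_eq, Matrix.zero_apply] at this
  exact_mod_cast this

lemma Nv_add_le (v w : Fin d → ℝ) : Nv Φ (v + w) ≤ Nv Φ v + Nv Φ w := by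
  unfold Nv
  have : (Matrix.diagonal (fun i => ((v + w) i : ℂ))) =
      Matrix.diagonal (fun i => (v i : ℂ)) + Matrix.diagonal (fun i => (w i : ℂ)) := by
    rw [Matrix.diagonal_add]
    congr 1
    ext i
    push_cast
    simp
  rw [this]
  exact Φ.add_le _ _

lemma Nv_smul {c : ℝ} (hc : 0 ≤ c) (v : Fin d → ℝ) : Nv Φ (c • v) = c * Nv Φ v := by
  unfold Nv
  have : (Matrix.diagonal (fun i => ((c • v) i : ℂ))) =
      (c : ℂ) • Matrix.diagonal (fun i => (v i : ℂ)) := by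
    ext i j
    by_cases h : i = j
    · subst h
      simp only [Matrix.diagonal_apply_eq, Matrix.smul_apply, Pi.smul_apply, smul_eq_mul]
      push_cast
      ring
    · simp [Matrix.diagonal_apply_ne _ h, h]
  rw [this, Φ.smul_eq, Complex.norm_real, Real.norm_eq_abs, abs_of_nonneg hc]

lemma Nv_sum_le {ι : Type*} (s : Finset ι) (g : ι → (Fin d → ℝ)) :
    Nv Φ (∑ i ∈ s, g i) ≤ ∑ i ∈ s, Nv Φ (g i) := by
  induction s using Finset.cons_induction with
  | empty => simp [Nv_zero]
  | cons a s ha ih =>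
    rw [Finset.sum_cons, Finset.sum_cons]
    exact le_trans (Nv_add_le Φ _ _) (by linarith [ih])

-- permutation invariance

lemma star_permMatrix (π : Equiv.Perm (Fin d)) :
    star (π.toPEquiv.toMatrix : Matrix (Fin d) (Fin d) ℂ) = (π⁻¹).toPEquiv.toMatrix := by
  ext i j
  simp only [Matrix.star_apply, PEquiv.toMatrix_apply, Equiv.toPEquiv_apply, Option.mem_def,
    Option.some.injEq]
  by_cases h : π j = i
  · have h2 : π⁻¹ i = j := by rw [← h]; simp
    simp [h, h2]
  · have h2 : ¬ (π⁻¹ i = j) := fun hh => h (by rw [← hh]; simp)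
    simpa [h] using h2

lemma permMatrix_unitary (π : Equiv.Perm (Fin d)) :
    (π.toPEquiv.toMatrix : Matrix (Fin d) (Fin d) ℂ) ∈ Matrix.unitaryGroup (Fin d) ℂ := by
  rw [Matrix.mem_unitaryGroup_iff]
  rw [star_permMatrix]
  rw [← PEquiv.toMatrix_trans, ← Equiv.toPEquiv_trans]
  have h1 : π.trans π⁻¹ = Equiv.refl (Fin d) := by ext x; simp
  rw [h1, Equiv.toPEquiv_refl, PEquiv.toMatrix_refl]

lemma Nv_perm (v : Fin d → ℝ) (π : Equiv.Perm (Fin d)) : Nv Φ (v ∘ π) = Nv Φ v := by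
  unfold Nv
  have key : (π.toPEquiv.toMatrix : Matrix (Fin d) (Fin d) ℂ) *
      Matrix.diagonal (fun i => (v i : ℂ)) *
      star (π.toPEquiv.toMatrix : Matrix (Fin d) (Fin d) ℂ) =
      Matrix.diagonal (fun i => ((v ∘ π) i : ℂ)) := by
    rw [star_permMatrix, PEquiv.toMatrix_toPEquiv_mul, PEquiv.mul_toMatrix_toPEquiv,
      Matrix.submatrix_submatrix]
    have h1 : (⇑π ∘ id : Fin d → Fin d) = ⇑π := by ext x; rfl
    have h2 : (id ∘ ⇑(π⁻¹).symm : Fin d → Fin d) = ⇑π := by ext x; simp [Equiv.Perm.inv_def]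
    rw [h1, h2, Matrix.submatrix_diagonal _ _ π.injective]
    rfl
  rw [← key]
  exact Φ.unitary_inv _ _ _ (permMatrix_unitary π)
    (by rw [star_permMatrix]; exact permMatrix_unitary π⁻¹)

lemma Nv_sign (v : Fin d → ℝ) (ε : Fin d → ℝ) (hε : ∀ i, ε i = 1 ∨ ε i = -1) :
    Nv Φ (fun i => ε i * v i) = Nv Φ v := by
  unfold Nv
  have hJu : (Matrix.diagonal (fun i => (ε i : ℂ))) ∈ Matrix.unitaryGroup (Fin d) ℂ := by
    rw [Matrix.mem_unitaryGroup_iff]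
    have h1 : star (Matrix.diagonal (fun i => (ε i : ℂ))) =
        Matrix.diagonal (fun i => (ε i : ℂ)) := by
      rw [Matrix.star_eq_conjTranspose, Matrix.diagonal_conjTranspose]
      have h0 : (star fun i => (ε i : ℂ)) = fun i => (ε i : ℂ) := by
        funext i
        simp [Complex.star_def, Complex.conj_ofReal]
      rw [h0]
    rw [h1, Matrix.diagonal_mul_diagonal]
    have h2 : (fun i => (ε i : ℂ) * (ε i : ℂ)) = fun _ => 1 := by
      ext i
      rcases hε i with h | h <;> rw [h] <;> norm_num
    rw [h2, Matrix.diagonal_one]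
  have key : Matrix.diagonal (fun i => ((ε i * v i : ℝ) : ℂ)) =
      Matrix.diagonal (fun i => (ε i : ℂ)) * Matrix.diagonal (fun i => (v i : ℂ)) * 1 := by
    rw [mul_one, Matrix.diagonal_mul_diagonal]
    congr 1
    ext i
    push_cast
    ring
  rw [key]
  exact Φ.unitary_inv _ _ _ hJu (one_mem _)

lemma N_herFun {A : Matrix (Fin d) (Fin d) ℂ} (hA : A.IsHermitian) (f : ℝ → ℝ) :
    Φ.N (herFun hA f) = Nv Φ (fun i => f (hA.eigenvalues i)) := by
  unfold herFun Nv
  exact Φ.unitary_inv _ _ _ hA.eigenvectorUnitary.2 (Unitary.star_mem hA.eigenvectorUnitary.2)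

lemma Nv_mono_weakmaj {x y : Fin d → ℝ} (hx : Antitone x) (hy : Antitone y)
    (hx0 : ∀ i, 0 ≤ x i)
    (hle : ∀ k, k ≤ d → psum x k ≤ psum y k) :
    Nv Φ x ≤ Nv Φ y := by
  classical
  have hmem := mem_convexHull_signperm hx hy hx0 hle
  set F : Finset (Fin d → ℝ) := Finset.univ.image
    (fun q : (Fin d → Bool) × Equiv.Perm (Fin d) =>
      fun i => (if q.1 i then (1:ℝ) else -1) * y (q.2 i)) with hF
  rw [show (Set.range (fun q : (Fin d → Bool) × Equiv.Perm (Fin d) =>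
      fun i => (if q.1 i then (1:ℝ) else -1) * y (q.2 i))) = (F : Set (Fin d → ℝ)) by
    rw [hF, Finset.coe_image, Finset.coe_univ, Set.image_univ]] at hmem
  rw [Finset.convexHull_eq] at hmem
  obtain ⟨wgt, hwgt0, hwgt1, hcm⟩ := hmem
  rw [Finset.centerMass_eq_of_sum_1 _ _ hwgt1] at hcm
  simp only [id] at hcm
  have hNa : ∀ z ∈ F, Nv Φ z = Nv Φ y := by
    intro z hz
    obtain ⟨q, _, rfl⟩ := Finset.mem_image.mp hz
    have h1 : (fun i => (if q.1 i then (1:ℝ) else -1) * y (q.2 i)) =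
        (fun i => (if q.1 i then (1:ℝ) else -1) * (y ∘ q.2) i) := rfl
    rw [h1, Nv_sign Φ (y ∘ q.2) _ (fun i => by by_cases h : q.1 i <;> simp [h]), Nv_perm]
  calc Nv Φ x = Nv Φ (∑ z ∈ F, wgt z • z) := by rw [← hcm]
    _ ≤ ∑ z ∈ F, Nv Φ (wgt z • z) := Nv_sum_le Φ F _
    _ = ∑ z ∈ F, wgt z * Nv Φ z := Finset.sum_congr rfl fun z hz => Nv_smul Φ (hwgt0 z hz) z
    _ = ∑ z ∈ F, wgt z * Nv Φ y := Finset.sum_congr rfl fun z hz => by rw [hNa z hz]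
    _ = Nv Φ y := by rw [← Finset.sum_mul, hwgt1, one_mul]

lemma card_filter_lt_le (k : ℕ) :
    (Finset.univ.filter (fun i : Fin d => (i : ℕ) < k)).card ≤ k := by
  have h2 := Finset.card_le_card_of_injOn
    (s := Finset.univ.filter (fun i : Fin d => (i : ℕ) < k)) (t := Finset.range k)
    (fun i : Fin d => (i : ℕ))
    (fun i hi => Finset.mem_range.mpr (Finset.mem_filter.mp hi).2)
    (fun i _ j _ h => Fin.ext h)
  simpa using h2

lemma Nv_mono_of_le {x y : Fin d → ℝ} (hx0 : ∀ i, 0 ≤ x i) (hxy : ∀ i, x i ≤ y i) :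
    Nv Φ x ≤ Nv Φ y := by
  obtain ⟨σ, hσ⟩ := exists_sort_perm x
  obtain ⟨τ, hτ⟩ := exists_sort_perm y
  have hy0 : ∀ i, 0 ≤ y i := fun i => le_trans (hx0 i) (hxy i)
  have hle : ∀ k, k ≤ d → psum (x ∘ σ) k ≤ psum (y ∘ τ) k := by
    intro k hk
    set T := (Finset.univ.filter (fun i : Fin d => (i : ℕ) < k)).map σ.toEmbedding with hT
    have h1 : psum (x ∘ σ) k = ∑ i ∈ T, x i := by
      rw [hT, Finset.sum_map]
      rfl
    have hcard : T.card ≤ k := by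
      rw [hT, Finset.card_map]
      have h2 := Finset.card_le_card_of_injOn
        (s := Finset.univ.filter (fun i : Fin d => (i : ℕ) < k)) (t := Finset.range k)
        (fun i : Fin d => (i : ℕ))
        (fun i hi => Finset.mem_range.mpr (Finset.mem_filter.mp hi).2)
        (fun i _ j _ h => Fin.ext h)
      simpa using h2
    calc psum (x ∘ σ) k = ∑ i ∈ T, x i := h1
      _ ≤ ∑ i ∈ T, y i := Finset.sum_le_sum fun i _ => hxy i
      _ ≤ psum (y ∘ τ) T.card := sum_le_psum_sorted y hτ T
      _ ≤ psum (y ∘ τ) k := psum_mono_k (fun i => hy0 _) hcard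
  have := Nv_mono_weakmaj Φ hσ hτ (fun i => hx0 _) hle
  rwa [Nv_perm, Nv_perm] at this

lemma Nv_holder {m : ℕ} (v : Fin m → Fin d → ℝ) (hv : ∀ l i, 0 ≤ v l i)
    (p : Fin m → ℝ) (hp : ∀ l, 0 ≤ p l) (hp_sum : ∑ l, p l = 1) :
    Nv Φ (fun i => ∏ l, v l i ^ p l) ≤ ∏ l, Nv Φ (v l) ^ p l := by
  classical
  by_cases hzero : ∃ l, p l ≠ 0 ∧ v l = 0
  · obtain ⟨l0, hpl0, hvl0⟩ := hzero
    have hL : (fun i => ∏ l, v l i ^ p l) = (0 : Fin d → ℝ) := by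
      funext i
      refine Finset.prod_eq_zero (Finset.mem_univ l0) ?_
      rw [hvl0]
      simp [Real.zero_rpow hpl0]
    rw [hL, Nv_zero]
    exact Finset.prod_nonneg fun l _ => Real.rpow_nonneg (Nv_nonneg Φ _) _
  · push_neg at hzero
    set c : Fin m → ℝ := fun l => Nv Φ (v l) with hc
    have hcnn : ∀ l, 0 ≤ c l := fun l => Nv_nonneg Φ _
    have hcpos : ∀ l, p l ≠ 0 → 0 < c l := fun l hl => Nv_pos Φ (hzero l hl)
    -- pointwise factorization and AM-GM
    have hfact : ∀ i, (∏ l, v l i ^ p l) = (∏ l, c l ^ p l) * ∏ l, (v l i / c l) ^ p l := by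
      intro i
      rw [← Finset.prod_mul_distrib]
      refine Finset.prod_congr rfl fun l _ => ?_
      by_cases hl : p l = 0
      · simp [hl]
      · have hcl := hcpos l hl
        rw [← Real.mul_rpow (le_of_lt hcl) (div_nonneg (hv l i) (hcnn l))]
        congr 1
        field_simp
    have hAM : ∀ i, (∏ l, (v l i / c l) ^ p l) ≤ ∑ l, p l * (v l i / c l) := by
      intro i
      exact Real.geom_mean_le_arith_mean_weighted Finset.univ p _ (fun l _ => hp l) hp_sum
        (fun l _ => div_nonneg (hv l i) (hcnn l))
    set C : ℝ := ∏ l, c l ^ p l with hC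
    have hCnn : 0 ≤ C := Finset.prod_nonneg fun l _ => Real.rpow_nonneg (hcnn l) _
    have hmono := Nv_mono_of_le Φ
      (x := fun i => ∏ l, v l i ^ p l)
      (y := fun i => C * ∑ l, p l * (v l i / c l))
      (fun i => by
        show (0:ℝ) ≤ ∏ l, v l i ^ p l
        exact Finset.prod_nonneg fun l _ => Real.rpow_nonneg (hv l i) _)
      (fun i => by
        show (∏ l, v l i ^ p l) ≤ C * ∑ l, p l * (v l i / c l)
        rw [hfact i]
        exact mul_le_mul_of_nonneg_left (hAM i) hCnn)
    refine le_trans hmono ?_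
    have hfun : (fun i => C * ∑ l, p l * (v l i / c l)) =
        C • ∑ l, (fun i => p l * (v l i / c l)) := by
      funext i
      rw [Pi.smul_apply, Finset.sum_apply]
      simp [smul_eq_mul]
    rw [hfun, Nv_smul Φ hCnn]
    have h2 : Nv Φ (∑ l, (fun i => p l * (v l i / c l))) ≤ 1 := by
      refine le_trans (Nv_sum_le Φ Finset.univ _) ?_
      have h3 : ∀ l, Nv Φ (fun i => p l * (v l i / c l)) = p l / c l * Nv Φ (v l) := by
        intro l
        have : (fun i => p l * (v l i / c l)) = (p l / c l) • v l := by
          funext i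
          rw [Pi.smul_apply, smul_eq_mul]
          ring
        rw [this, Nv_smul Φ (div_nonneg (hp l) (hcnn l))]
      calc ∑ l, Nv Φ (fun i => p l * (v l i / c l)) = ∑ l, p l / c l * Nv Φ (v l) :=
            Finset.sum_congr rfl fun l _ => h3 l
        _ = ∑ l, p l := by
            refine Finset.sum_congr rfl fun l _ => ?_
            by_cases hl : p l = 0
            · simp [hl]
            · have hcl := hcpos l hl
              rw [show Nv Φ (v l) = c l from rfl, div_mul_cancel₀ _ (ne_of_gt hcl)]
        _ = 1 := hp_sum
        _ ≤ 1 := le_refl 1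
    calc C * Nv Φ (∑ l, (fun i => p l * (v l i / c l))) ≤ C * 1 :=
          mul_le_mul_of_nonneg_left h2 hCnn
      _ = C := mul_one C
      _ = ∏ l, Nv Φ (v l) ^ p l := by rw [hC]

lemma card_filter_lt_eq {n : ℕ} (hn : n ≤ d) :
    (Finset.univ.filter (fun i : Fin d => (i : ℕ) < n)).card = n := by
  have h := Finset.card_bij (s := Finset.univ.filter (fun i : Fin d => (i : ℕ) < n))
    (t := Finset.range n) (fun i _ => (i : ℕ))
    (fun i hi => Finset.mem_range.mpr (Finset.mem_filter.mp hi).2)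
    (fun i _ j _ h => Fin.ext h)
    (fun j hj => ⟨⟨j, lt_of_lt_of_le (Finset.mem_range.mp hj) hn⟩,
      Finset.mem_filter.mpr ⟨Finset.mem_univ _, Finset.mem_range.mp hj⟩, rfl⟩)
  rw [h, Finset.card_range]

lemma eigDesc_antitone {A : Matrix (Fin d) (Fin d) ℂ} (hA : A.IsHermitian) :
    Antitone (eigDesc hA) := by
  have h1 : Monotone (hA.eigenvalues ∘ ⇑(Tuple.sort hA.eigenvalues)) := Tuple.monotone_sort _
  intro i j hij
  exact h1 (Fin.rev_le_rev.mpr hij)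

lemma eigDesc_pos {A : Matrix (Fin d) (Fin d) ℂ} (hA : A.PosDef) (i : Fin d) :
    0 < eigDesc hA.1 i := hA.eigenvalues_pos _

lemma comp_eigDesc {A : Matrix (Fin d) (Fin d) ℂ} (hA : A.IsHermitian) (f : ℝ → ℝ) :
    ∃ π : Equiv.Perm (Fin d),
      (fun i => f (hA.eigenvalues i)) = (fun i => f (eigDesc hA i)) ∘ ⇑π := by
  refine ⟨(Fin.revPerm.trans (Tuple.sort hA.eigenvalues))⁻¹, funext fun i => ?_⟩
  show f (hA.eigenvalues i) = f (eigDesc hA ((Fin.revPerm.trans (Tuple.sort hA.eigenvalues))⁻¹ i))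
  congr 1
  show hA.eigenvalues i = hA.eigenvalues ((Tuple.sort hA.eigenvalues)
    (Fin.rev ((Fin.revPerm.trans (Tuple.sort hA.eigenvalues))⁻¹ i)))
  have h1 : ∀ j, (Fin.revPerm.trans (Tuple.sort hA.eigenvalues)) j =
      (Tuple.sort hA.eigenvalues) (Fin.rev j) := fun j => rfl
  rw [← h1, ← Equiv.Perm.mul_apply, mul_inv_cancel, Equiv.Perm.one_apply]

end LogMajProof


open LogMajProof in
/-- **Theorem 5.1, (I) ⇒ (II), discrete positive definite case.** Let `A, B l` be
positive definite with `log λ(A) ≺ ∑ l, p l • log λ(B l)` (majorization).  Then for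
every continuous `f : (0,∞) → [0,∞)` with `x ↦ log f(e^x)` convex on `ℝ` (encoded
multiplicatively) and every unitarily invariant norm `N`,
`N (f(A)) ≤ ∏ l, N (f(B l)) ^ (p l)`. -/
theorem log_majorization_average_implies_norm_ineq
    {d m : ℕ} {A : Matrix (Fin d) (Fin d) ℂ} (hA : A.PosDef)
    {B : Fin m → Matrix (Fin d) (Fin d) ℂ} (hB : ∀ l, (B l).PosDef)
    (p : Fin m → ℝ) (hp : ∀ l, 0 ≤ p l) (hp_sum : ∑ l, p l = 1)
    (hmaj : (∀ k, k ≤ d →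
        ∑ i ∈ Finset.univ.filter (fun i : Fin d => (i : ℕ) < k),
          Real.log (eigDesc hA.1 i) ≤
        ∑ i ∈ Finset.univ.filter (fun i : Fin d => (i : ℕ) < k),
          ∑ l, p l * Real.log (eigDesc (hB l).1 i)) ∧
      ∑ i, Real.log (eigDesc hA.1 i) = ∑ i, ∑ l, p l * Real.log (eigDesc (hB l).1 i))
    (f : ℝ → ℝ)
    (hf_cont : ContinuousOn f (Set.Ioi (0 : ℝ)))
    (hf_nonneg : ∀ x : ℝ, 0 < x → 0 ≤ f x)
    (hf_logconv : ∀ x y t : ℝ, 0 ≤ t → t ≤ 1 →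
      f (Real.exp (t * x + (1 - t) * y)) ≤ f (Real.exp x) ^ t * f (Real.exp y) ^ (1 - t)) :
    ∀ Φ : UINorm d, Φ.N (herFun hA.1 f) ≤ ∏ l, Φ.N (herFun (hB l).1 f) ^ p l := by
  intro Φ
  classical
  -- basic data
  have ha_pos : ∀ i, 0 < eigDesc hA.1 i := eigDesc_pos hA
  have hb_pos : ∀ l i, 0 < eigDesc (hB l).1 i := fun l => eigDesc_pos (hB l)
  set u : Fin d → ℝ := fun i => Real.log (eigDesc hA.1 i) with hu_def
  set c : Fin d → ℝ := fun i => ∑ l, p l * Real.log (eigDesc (hB l).1 i) with hc_def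
  have hu_anti : Antitone u := fun i j hij =>
    Real.log_le_log (ha_pos j) (eigDesc_antitone hA.1 hij)
  have hc_anti : Antitone c := by
    intro i j hij
    refine Finset.sum_le_sum fun l _ => ?_
    exact mul_le_mul_of_nonneg_left
      (Real.log_le_log (hb_pos l j) (eigDesc_antitone (hB l).1 hij)) (hp l)
  have hle : ∀ k, k ≤ d → psum u k ≤ psum c k := fun k hk => hmaj.1 k hk
  have hsum : ∑ i, u i = ∑ i, c i := hmaj.2
  -- the multiplicatively convex function
  set g : ℝ → ℝ := fun t => f (Real.exp t) with hg_def
  have hg0 : ∀ t, 0 ≤ g t := fun t => hf_nonneg _ (Real.exp_pos t)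
  have hgc : ∀ a b t : ℝ, 0 ≤ t → t ≤ 1 → g (t * a + (1 - t) * b) ≤ g a ^ t * g b ^ (1 - t) :=
    fun a b t ht0 ht1 => hf_logconv a b t ht0 ht1
  have hfa : ∀ i, f (eigDesc hA.1 i) = g (u i) := fun i => by
    rw [hg_def, hu_def]
    simp only []
    rw [Real.exp_log (ha_pos i)]
  -- target vector
  set H : Fin d → ℝ := fun i => ∏ l, f (eigDesc (hB l).1 i) ^ p l with hH_def
  have hH0 : ∀ i, 0 ≤ H i := fun i =>
    Finset.prod_nonneg fun l _ => Real.rpow_nonneg (hf_nonneg _ (hb_pos l i)) _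
  have hgcH : ∀ i, g (c i) ≤ H i := by
    intro i
    have h1 := jensen_mult g hg0 hgc Finset.univ p (fun l => Real.log (eigDesc (hB l).1 i))
      (fun l _ => hp l) hp_sum
    refine le_trans h1 (le_of_eq ?_)
    refine Finset.prod_congr rfl fun l _ => ?_
    rw [hg_def]
    simp only []
    rw [Real.exp_log (hb_pos l i)]
  -- sorting permutations
  set GA : Fin d → ℝ := fun i => f (eigDesc hA.1 i) with hGA_def
  have hGA0 : ∀ i, 0 ≤ GA i := fun i => hf_nonneg _ (ha_pos i)
  obtain ⟨σ, hσ⟩ := exists_sort_perm GA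
  obtain ⟨τ, hτ⟩ := exists_sort_perm H
  obtain ⟨ρ, hρ⟩ := exists_sort_perm (fun i => g (c i))
  -- the weak majorization bound
  have hkey : ∀ k, k ≤ d → psum (GA ∘ σ) k ≤ psum (H ∘ τ) k := by
    intro k hk
    set T := (Finset.univ.filter (fun i : Fin d => (i : ℕ) < k)).map σ.toEmbedding with hT
    have h1 : psum (GA ∘ σ) k = ∑ i ∈ T, GA i := by
      rw [hT, Finset.sum_map]
      rfl
    have hTcard : T.card ≤ k := by rw [hT, Finset.card_map]; exact card_filter_lt_le k
    have h2 : ∑ i ∈ T, GA i = ∑ i ∈ T, g (u i) :=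
      Finset.sum_congr rfl fun i _ => hfa i
    have h3 : ∑ i ∈ T, g (u i) ≤ psum ((fun i => g (c i)) ∘ ρ) T.card :=
      maj_gsum_le hu_anti hc_anti hle hsum g hg0 hgc hρ T
    have h4 : psum ((fun i => g (c i)) ∘ ρ) T.card ≤ psum (H ∘ τ) T.card := by
      unfold psum
      set T2 := (Finset.univ.filter (fun i : Fin d => (i : ℕ) < T.card)).map ρ.toEmbedding
        with hT2
      have h5 : ∑ i ∈ Finset.univ.filter (fun i : Fin d => (i : ℕ) < T.card),
          ((fun i => g (c i)) ∘ ρ) i = ∑ i ∈ T2, g (c i) := by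
        rw [hT2, Finset.sum_map]
        rfl
      rw [h5]
      have h6 : ∑ i ∈ T2, g (c i) ≤ ∑ i ∈ T2, H i :=
        Finset.sum_le_sum fun i _ => hgcH i
      have h7 : ∑ i ∈ T2, H i ≤ psum (H ∘ τ) T2.card := sum_le_psum_sorted H hτ T2
      have hTd : T.card ≤ d := by
        rw [hT, Finset.card_map]
        exact le_trans (Finset.card_filter_le _ _) (by simp)
      have hT2card : T2.card = T.card := by
        rw [hT2, Finset.card_map, card_filter_lt_eq hTd]
      rw [hT2card] at h7
      calc ∑ i ∈ T2, g (c i) ≤ ∑ i ∈ T2, H i := h6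
        _ ≤ psum (H ∘ τ) T.card := h7
    have h8 : psum (H ∘ τ) T.card ≤ psum (H ∘ τ) k :=
      psum_mono_k (fun i => hH0 _) hTcard
    rw [h1, h2]
    exact le_trans h3 (le_trans h4 h8)
  have hmain : Nv Φ GA ≤ Nv Φ H := by
    have h1 := Nv_mono_weakmaj Φ hσ hτ (fun i => hGA0 _) hkey
    rwa [Nv_perm, Nv_perm] at h1
  have hhold : Nv Φ H ≤ ∏ l, Nv Φ (fun i => f (eigDesc (hB l).1 i)) ^ p l :=
    Nv_holder Φ (fun l i => f (eigDesc (hB l).1 i))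
      (fun l i => hf_nonneg _ (hb_pos l i)) p hp hp_sum
  -- translate herFun norms
  have hNA : Φ.N (herFun hA.1 f) = Nv Φ GA := by
    rw [N_herFun]
    obtain ⟨π, hπ⟩ := comp_eigDesc hA.1 f
    rw [hπ, hGA_def, Nv_perm]
  have hNB : ∀ l, Φ.N (herFun (hB l).1 f) = Nv Φ (fun i => f (eigDesc (hB l).1 i)) := by
    intro l
    rw [N_herFun]
    obtain ⟨π, hπ⟩ := comp_eigDesc (hB l).1 f
    rw [hπ, Nv_perm]
  rw [hNA]
  calc Nv Φ GA ≤ Nv Φ H := hmain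
    _ ≤ ∏ l, Nv Φ (fun i => f (eigDesc (hB l).1 i)) ^ p l := hhold
    _ = ∏ l, Φ.N (herFun (hB l).1 f) ^ p l :=
        Finset.prod_congr rfl fun l _ => by rw [hNB l]
end

section
/- Let A, B_1, ..., B_m be positive definite d×d matrices and p_1,...,p_m nonnegative weights summing to 1. Suppose that for every p > 0 and every k in [d], ‖A^p‖_{(k)} ≤ prod_{l=1}^m ‖B_l^p‖_{(k)}^{p_l}, and moreover ‖A^{-p}‖_1 ≤ prod_{l=1}^m ‖B_l^{-p}‖_1^{p_l} for every p > 0. Then log λ(A) ≺ sum_l p_l log λ(B_l) (majorization). -/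
open scoped BigOperators ComplexOrder

lemma eigDesc_pos {d : ℕ} {A : Matrix (Fin d) (Fin d) ℂ} (hA : A.PosDef) (i : Fin d) :
    0 < eigDesc hA.1 i :=
  hA.eigenvalues_pos _

open Filter Real in
lemma key_tendsto {d : ℕ} (s : Finset (Fin d)) (hs : s.Nonempty) (c : Fin d → ℝ) :
    Tendsto (fun q : ℝ =>
        (Real.log (∑ i ∈ s, Real.exp (q * c i)) - Real.log (s.card : ℝ)) / q)
      (nhdsWithin 0 (Set.Ioi 0)) (nhds ((∑ i ∈ s, c i) / (s.card : ℝ))) := by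
  have hcard : (0 : ℝ) < (s.card : ℝ) := by
    exact_mod_cast Finset.card_pos.mpr hs
  have hS0 : (∑ i ∈ s, Real.exp ((0:ℝ) * c i)) = (s.card : ℝ) := by
    simp
  have hderivS : HasDerivAt (fun q : ℝ => ∑ i ∈ s, Real.exp (q * c i))
      (∑ i ∈ s, Real.exp ((0:ℝ) * c i) * c i) 0 := by
    refine HasDerivAt.fun_sum fun i _ => ?_
    exact (hasDerivAt_mul_const (c i)).exp
  have hF : HasDerivAt (fun q : ℝ => Real.log (∑ i ∈ s, Real.exp (q * c i)))
      ((∑ i ∈ s, Real.exp ((0:ℝ) * c i) * c i) / (∑ i ∈ s, Real.exp ((0:ℝ) * c i))) 0 :=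
    hderivS.log (by rw [hS0]; exact ne_of_gt hcard)
  rw [hasDerivAt_iff_tendsto_slope] at hF
  have heq : ((∑ i ∈ s, Real.exp ((0:ℝ) * c i) * c i) / (∑ i ∈ s, Real.exp ((0:ℝ) * c i)))
      = (∑ i ∈ s, c i) / (s.card : ℝ) := by
    rw [hS0]; congr 1; exact Finset.sum_congr rfl fun i _ => by simp
  rw [heq] at hF
  have hmono : nhdsWithin (0:ℝ) (Set.Ioi 0) ≤ nhdsWithin 0 {(0:ℝ)}ᶜ :=
    nhdsWithin_mono _ (fun x hx => ne_of_gt hx)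
  refine (hF.mono_left hmono).congr fun q => ?_
  simp [slope_def_field, div_eq_mul_inv, hS0, sub_zero, mul_comm]

open Filter Real in
/-- The key analytic step: taking `q → 0⁺` in the power-sum inequalities. -/
lemma key_ineq {d m : ℕ} (s : Finset (Fin d)) (hs : s.Nonempty)
    (a : Fin d → ℝ) (b : Fin m → Fin d → ℝ)
    (ha : ∀ i, 0 < a i) (hb : ∀ l i, 0 < b l i)
    (p : Fin m → ℝ) (hp : ∀ l, 0 ≤ p l) (hp_sum : ∑ l, p l = 1)
    (h : ∀ q : ℝ, 0 < q → ∑ i ∈ s, a i ^ q ≤ ∏ l, (∑ i ∈ s, b l i ^ q) ^ p l) :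
    ∑ i ∈ s, Real.log (a i) ≤ ∑ l, p l * ∑ i ∈ s, Real.log (b l i) := by
  have hcard : (0 : ℝ) < (s.card : ℝ) := by exact_mod_cast Finset.card_pos.mpr hs
  set n : ℝ := (s.card : ℝ)
  have hrw : ∀ (f : Fin d → ℝ), (∀ i, 0 < f i) → ∀ q : ℝ,
      ∑ i ∈ s, f i ^ q = ∑ i ∈ s, Real.exp (q * Real.log (f i)) := by
    intro f hf q
    refine Finset.sum_congr rfl fun i _ => ?_
    rw [Real.rpow_def_of_pos (hf i), mul_comm]
  -- the combined function tends to the difference of limits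
  have tA := key_tendsto s hs (fun i => Real.log (a i))
  have tB : Tendsto (fun q : ℝ => ∑ l, p l *
        ((Real.log (∑ i ∈ s, Real.exp (q * Real.log (b l i))) - Real.log n) / q))
      (nhdsWithin 0 (Set.Ioi 0))
      (nhds (∑ l, p l * ((∑ i ∈ s, Real.log (b l i)) / n))) := by
    exact tendsto_finset_sum _ fun l _ =>
      (key_tendsto s hs (fun i => Real.log (b l i))).const_mul (p l)
  have tD := tA.sub tB
  have hle : (∑ i ∈ s, Real.log (a i)) / n - ∑ l, p l * ((∑ i ∈ s, Real.log (b l i)) / n)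
      ≤ 0 := by
    refine le_of_tendsto tD ?_
    filter_upwards [self_mem_nhdsWithin] with q (hq : 0 < q)
    -- the pointwise inequality
    have hSA : 0 < ∑ i ∈ s, a i ^ q :=
      Finset.sum_pos (fun i _ => Real.rpow_pos_of_pos (ha i) q) hs
    have hSB : ∀ l, 0 < ∑ i ∈ s, b l i ^ q := fun l =>
      Finset.sum_pos (fun i _ => Real.rpow_pos_of_pos (hb l i) q) hs
    have hlog : Real.log (∑ i ∈ s, a i ^ q) ≤
        ∑ l, p l * Real.log (∑ i ∈ s, b l i ^ q) := by
      calc Real.log (∑ i ∈ s, a i ^ q)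
          ≤ Real.log (∏ l, (∑ i ∈ s, b l i ^ q) ^ p l) := Real.log_le_log hSA (h q hq)
        _ = ∑ l, Real.log ((∑ i ∈ s, b l i ^ q) ^ p l) := by
            exact Real.log_prod fun l _ =>
              ne_of_gt (Real.rpow_pos_of_pos (hSB l) _)
        _ = ∑ l, p l * Real.log (∑ i ∈ s, b l i ^ q) := by
            exact Finset.sum_congr rfl fun l _ => Real.log_rpow (hSB l) _
    have hbrw : ∀ l, Real.log (∑ i ∈ s, Real.exp (q * Real.log (b l i)))
        = Real.log (∑ i ∈ s, b l i ^ q) := fun l => by rw [hrw (b l) (hb l) q]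
    have e1 : ∑ l, p l *
        ((Real.log (∑ i ∈ s, Real.exp (q * Real.log (b l i))) - Real.log n) / q)
        = ((∑ l, p l * Real.log (∑ i ∈ s, b l i ^ q)) - Real.log n) / q := by
      simp_rw [hbrw]
      have e2 : ∑ l, p l * Real.log (∑ i ∈ s, b l i ^ q) - Real.log n
          = ∑ l, p l * (Real.log (∑ i ∈ s, b l i ^ q) - Real.log n) := by
        simp_rw [mul_sub]
        rw [Finset.sum_sub_distrib, ← Finset.sum_mul, hp_sum, one_mul]
      rw [e2, Finset.sum_div]
      exact Finset.sum_congr rfl fun l _ => (mul_div_assoc _ _ _).symm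
    rw [e1, ← hrw a ha q, div_sub_div_same]
    refine div_nonpos_of_nonpos_of_nonneg (by linarith) hq.le
  have hmain : (∑ i ∈ s, Real.log (a i)) / n ≤
      ∑ l, p l * ((∑ i ∈ s, Real.log (b l i)) / n) := by linarith
  have e3 : ∑ l, p l * ((∑ i ∈ s, Real.log (b l i)) / n)
      = (∑ l, p l * ∑ i ∈ s, Real.log (b l i)) / n := by
    rw [Finset.sum_div]
    exact Finset.sum_congr rfl fun l _ => (mul_div_assoc _ _ _).symm
  rw [e3] at hmain
  exact (div_le_div_iff_of_pos_right hcard).mp hmain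

lemma sum_swap_rw {d m : ℕ} (s : Finset (Fin d)) (p : Fin m → ℝ) (f : Fin m → Fin d → ℝ) :
    ∑ i ∈ s, ∑ l, p l * f l i = ∑ l, p l * ∑ i ∈ s, f l i := by
  rw [Finset.sum_comm]
  exact Finset.sum_congr rfl fun l _ => (Finset.mul_sum _ _ _).symm

/-- **Theorem 5.1, (II) ⇒ (I), discrete positive definite case.** Let `A, B l` be
positive definite and `p l ≥ 0` weights summing to `1`.  Assume the Ky Fan norm
inequalities `‖A^p‖_(k) ≤ ∏ l, ‖(B l)^p‖_(k)^(p l)` for all `p > 0`, `k ∈ [d]`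
(where `‖X^p‖_(k) = ∑_{i<k} λ_i(X)^p`), and the trace-norm inequalities
`‖A^{-p}‖₁ ≤ ∏ l, ‖(B l)^{-p}‖₁^(p l)` for all `p > 0`.  Then
`log λ(A) ≺ ∑ l, p l • log λ(B l)` (majorization). -/
theorem kyfan_power_ineqs_imply_log_majorization
    {d m : ℕ} {A : Matrix (Fin d) (Fin d) ℂ} (hA : A.PosDef)
    {B : Fin m → Matrix (Fin d) (Fin d) ℂ} (hB : ∀ l, (B l).PosDef)
    (p : Fin m → ℝ) (hp : ∀ l, 0 ≤ p l) (hp_sum : ∑ l, p l = 1)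
    (hpos : ∀ q : ℝ, 0 < q → ∀ k, k ≤ d →
      ∑ i ∈ Finset.univ.filter (fun i : Fin d => (i : ℕ) < k), eigDesc hA.1 i ^ q ≤
      ∏ l, (∑ i ∈ Finset.univ.filter (fun i : Fin d => (i : ℕ) < k),
        eigDesc (hB l).1 i ^ q) ^ p l)
    (hneg : ∀ q : ℝ, 0 < q →
      ∑ i, eigDesc hA.1 i ^ (-q) ≤ ∏ l, (∑ i, eigDesc (hB l).1 i ^ (-q)) ^ p l) :
    (∀ k, k ≤ d →
        ∑ i ∈ Finset.univ.filter (fun i : Fin d => (i : ℕ) < k),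
          Real.log (eigDesc hA.1 i) ≤
        ∑ i ∈ Finset.univ.filter (fun i : Fin d => (i : ℕ) < k),
          ∑ l, p l * Real.log (eigDesc (hB l).1 i)) ∧
      ∑ i, Real.log (eigDesc hA.1 i) = ∑ i, ∑ l, p l * Real.log (eigDesc (hB l).1 i) := by
  have part1 : ∀ k, k ≤ d →
      ∑ i ∈ Finset.univ.filter (fun i : Fin d => (i : ℕ) < k),
        Real.log (eigDesc hA.1 i) ≤
      ∑ i ∈ Finset.univ.filter (fun i : Fin d => (i : ℕ) < k),
        ∑ l, p l * Real.log (eigDesc (hB l).1 i) := by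
    intro k hk
    set s := Finset.univ.filter (fun i : Fin d => (i : ℕ) < k) with hs_def
    rcases s.eq_empty_or_nonempty with hs | hs
    · simp [hs]
    · rw [sum_swap_rw]
      exact key_ineq s hs _ _ (eigDesc_pos hA) (fun l => eigDesc_pos (hB l))
        p hp hp_sum (fun q hq => hpos q hq k hk)
  refine ⟨part1, ?_⟩
  rcases Nat.eq_zero_or_pos d with hd | hd
  · subst hd; simp
  -- the filter at k = d is everything
  have huniv : Finset.univ.filter (fun i : Fin d => (i : ℕ) < d) = Finset.univ := by
    refine Finset.filter_true_of_mem fun i _ => i.isLt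
  have hge : ∑ i, ∑ l, p l * Real.log (eigDesc (hB l).1 i) ≤
      ∑ i, Real.log (eigDesc hA.1 i) := by
    have hnonempty : (Finset.univ : Finset (Fin d)).Nonempty :=
      Finset.univ_nonempty_iff.mpr (Fin.pos_iff_nonempty.mp hd)
    have hconv : ∀ (x q : ℝ), 0 < x → x⁻¹ ^ q = x ^ (-q) := fun x q hx => by
      rw [Real.inv_rpow hx.le, Real.rpow_neg hx.le]
    have key := key_ineq Finset.univ hnonempty
      (fun i => (eigDesc hA.1 i)⁻¹) (fun l i => (eigDesc (hB l).1 i)⁻¹)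
      (fun i => inv_pos.mpr (eigDesc_pos hA i))
      (fun l i => inv_pos.mpr (eigDesc_pos (hB l) i)) p hp hp_sum ?_
    · simp only [Real.log_inv, mul_neg, Finset.sum_neg_distrib, neg_le_neg_iff] at key
      rw [sum_swap_rw]
      exact key
    · intro q hq
      have eA : ∑ i, (fun i => (eigDesc hA.1 i)⁻¹) i ^ q = ∑ i, eigDesc hA.1 i ^ (-q) :=
        Finset.sum_congr rfl fun i _ => hconv _ q (eigDesc_pos hA i)
      have eB : ∏ l, (∑ i, (fun l i => (eigDesc (hB l).1 i)⁻¹) l i ^ q) ^ p l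
          = ∏ l, (∑ i, eigDesc (hB l).1 i ^ (-q)) ^ p l := by
        refine Finset.prod_congr rfl fun l _ => ?_
        congr 1
        exact Finset.sum_congr rfl fun i _ => hconv _ q (eigDesc_pos (hB l) i)
      rw [eA, eB]
      exact hneg q hq
  have hle := part1 d le_rfl
  rw [huniv] at hle
  exact le_antisymm hle hge
end
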